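/- The function f(x) = x·e^{x·cot(x)-1}/sin(x) is strictly decreasing on (0, π/2), with f(x) → 1 as x → 0+ and f(x) → π/(2e) as x → π/2-. -/

import Mathlib

open Real Set Filter Topology

private lemma gderiv {x : ℝ} (hx : x ∈ Ioo 0 (π/2)) :
    HasDerivAt (fun x : ℝ => Real.log x - Real.log (Real.sin x) + (x * (Real.cos x / Real.sin x) - 1))
      (x⁻¹ - x / (Real.sin x)^2) x := by
  have hx0 : x ≠ 0 := ne_of_gt hx.1
  have hs : Real.sin x > 0 := Real.sin_pos_of_pos_of_lt_pi hx.1 (hx.2.trans (by linarith [Real.pi_pos]))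
  have hs0 : Real.sin x ≠ 0 := ne_of_gt hs
  have h1 : HasDerivAt Real.log x⁻¹ x := Real.hasDerivAt_log hx0
  have h2 : HasDerivAt (fun x : ℝ => Real.log (Real.sin x)) ((Real.sin x)⁻¹ * Real.cos x) x :=
    (Real.hasDerivAt_log hs0).comp x (Real.hasDerivAt_sin x)
  have h3 : HasDerivAt (fun x : ℝ => Real.cos x / Real.sin x)
      ((-Real.sin x * Real.sin x - Real.cos x * Real.cos x) / (Real.sin x)^2) x :=
    (Real.hasDerivAt_cos x).div (Real.hasDerivAt_sin x) hs0
  have h4 : HasDerivAt (fun x : ℝ => x * (Real.cos x / Real.sin x) - 1)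
      (1 * (Real.cos x / Real.sin x) + x * ((-Real.sin x * Real.sin x - Real.cos x * Real.cos x) / (Real.sin x)^2)) x := by
    simpa using ((hasDerivAt_id x).mul h3).sub_const 1
  have := (h1.sub h2).add h4
  refine this.congr_deriv ?_
  have hpyth : -Real.sin x * Real.sin x - Real.cos x * Real.cos x = -1 := by
    nlinarith [Real.sin_sq_add_cos_sq x]
  rw [hpyth]
  field_simp
  ring

private lemma geq {x : ℝ} (hx : x ∈ Ioo 0 (π/2)) :
    x * Real.exp (x * (Real.cos x / Real.sin x) - 1) / Real.sin x =
      Real.exp (Real.log x - Real.log (Real.sin x) + (x * (Real.cos x / Real.sin x) - 1)) := by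
  have hs : Real.sin x > 0 := Real.sin_pos_of_pos_of_lt_pi hx.1 (hx.2.trans (by linarith [Real.pi_pos]))
  rw [Real.exp_add, show Real.exp (Real.log x - Real.log (Real.sin x)) = x / Real.sin x by
    rw [Real.exp_sub, Real.exp_log hx.1, Real.exp_log hs]]
  ring

theorem sandor_f5 :
    StrictAntiOn (fun x : ℝ => x * exp (x * (cos x / sin x) - 1) / sin x)
      (Ioo 0 (π/2)) ∧
    Tendsto (fun x : ℝ => x * exp (x * (cos x / sin x) - 1) / sin x)
      (𝓝[>] 0) (𝓝 1) ∧
    Tendsto (fun x : ℝ => x * exp (x * (cos x / sin x) - 1) / sin x)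
      (𝓝[<] (π/2)) (𝓝 (π / (2 * exp 1))) := by
  refine ⟨?_, ?_, ?_⟩
  · -- strict anti
    have hg : StrictAntiOn (fun x : ℝ => Real.log x - Real.log (Real.sin x) + (x * (Real.cos x / Real.sin x) - 1)) (Ioo 0 (π/2)) := by
      apply strictAntiOn_of_deriv_neg (convex_Ioo _ _)
      · exact fun x hx => ((gderiv hx).continuousAt).continuousWithinAt
      · intro x hx
        rw [interior_Ioo] at hx
        rw [(gderiv hx).deriv]
        have hx0 := hx.1
        have hs : Real.sin x > 0 := Real.sin_pos_of_pos_of_lt_pi hx.1 (hx.2.trans (by linarith [Real.pi_pos]))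
        have hlt : Real.sin x < x := Real.sin_lt hx.1
        rw [sub_neg, inv_eq_one_div, div_lt_div_iff₀ hx0 (by positivity)]
        nlinarith
    intro x hx y hy hxy
    dsimp only
    rw [geq hx, geq hy]
    exact Real.exp_lt_exp.mpr (hg hx hy hxy)
  · -- limit at 0
    have hslope : Tendsto (fun x : ℝ => Real.sin x / x) (𝓝[>] 0) (𝓝 1) := by
      have := (Real.hasDerivAt_sin 0)
      rw [hasDerivAt_iff_tendsto_slope] at this
      simp only [Real.cos_zero] at this
      have h2 := this.mono_left (nhdsWithin_mono _ (fun x hx => ne_of_gt hx))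
      refine h2.congr' ?_
      filter_upwards [self_mem_nhdsWithin] with x hx
      simp [slope_def_field, div_eq_iff (ne_of_gt (show (0:ℝ) < x from hx))]
    have hinv : Tendsto (fun x : ℝ => (Real.sin x / x)⁻¹) (𝓝[>] 0) (𝓝 1) := by
      simpa using hslope.inv₀ one_ne_zero
    have hcos : Tendsto (fun x : ℝ => Real.cos x) (𝓝[>] 0) (𝓝 1) := by
      simpa using (Real.continuous_cos.continuousAt (x := (0:ℝ))).tendsto.mono_left nhdsWithin_le_nhds
    have hmain : Tendsto (fun x : ℝ => (Real.sin x / x)⁻¹ * Real.exp (Real.cos x * (Real.sin x / x)⁻¹ - 1)) (𝓝[>] 0) (𝓝 1) := by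
      have he : Tendsto (fun x : ℝ => Real.exp (Real.cos x * (Real.sin x / x)⁻¹ - 1)) (𝓝[>] 0)
          (𝓝 (Real.exp (1 * 1 - 1))) :=
        (Real.continuous_exp.continuousAt.tendsto).comp ((hcos.mul hinv).sub tendsto_const_nhds)
      have := hinv.mul he
      simpa using this
    refine hmain.congr' ?_
    filter_upwards [Ioo_mem_nhdsGT_of_mem (by constructor <;> [exact le_refl 0; exact Real.pi_pos])] with x hx
    have hs : Real.sin x > 0 := Real.sin_pos_of_pos_of_lt_pi hx.1 hx.2
    rw [inv_div, show Real.cos x * (x / Real.sin x) = x * (Real.cos x / Real.sin x) by ring]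
    field_simp
  · -- limit at π/2
    have hc : ContinuousAt (fun x : ℝ => x * Real.exp (x * (Real.cos x / Real.sin x) - 1) / Real.sin x) (π/2) := by
      apply ContinuousAt.div
      · exact continuousAt_id.mul (Real.continuous_exp.continuousAt.comp
          ((continuousAt_id.mul (Real.continuous_cos.continuousAt.div Real.continuous_sin.continuousAt (by simp))).sub continuousAt_const))
      · exact Real.continuous_sin.continuousAt
      · simp
    have := hc.tendsto.mono_left (nhdsWithin_le_nhds : 𝓝[<] (π/2) ≤ 𝓝 (π/2))
    convert this using 2
    rw [Real.sin_pi_div_two, Real.cos_pi_div_two]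
    norm_num
    rw [Real.exp_neg]
    field_simp
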